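/- For every graph G, the treedepth of G equals the minimum number of colors in a centered coloring of G. -/

import Mathlib

/-- A linear coloring: every path in `G` contains a vertex whose color appears
exactly once on the path. -/
def IsLinearColoring {V C : Type*} [DecidableEq C] (G : SimpleGraph V) (ψ : V → C) : Prop :=
  ∀ ⦃u v : V⦄ (p : G.Walk u v), p.IsPath →
    ∃ w ∈ p.support, (p.support.map ψ).count (ψ w) = 1

/-- A centered coloring: every nonempty vertex set inducing a connected subgraph
contains a vertex whose color appears exactly once in the set. -/
def IsCenteredColoring {V C : Type*} [DecidableEq C] (G : SimpleGraph V) (φ : V → C) : Prop :=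
  ∀ S : Finset V, S.Nonempty → (G.induce (S : Set V)).Connected →
    ∃ w ∈ S, (S.filter (fun x => φ x = φ w)).card = 1

/-- The linear coloring number: minimum number of colors of a linear coloring. -/
noncomputable def chiLin {V : Type*} (G : SimpleGraph V) : ℕ :=
  sInf {k | ∃ ψ : V → Fin k, IsLinearColoring G ψ}

/-- The centered coloring number: minimum number of colors of a centered coloring. -/
noncomputable def chiCen {V : Type*} (G : SimpleGraph V) : ℕ :=
  sInf {k | ∃ φ : V → Fin k, IsCenteredColoring G φ}

/-- A treedepth decomposition of `G`: a rooted forest on the vertices of `G`,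
given by its ancestor relation `anc` (a partial order whose down-sets are chains),
such that every edge of `G` joins an ancestor-descendant pair. -/
structure TreedepthDecomp {V : Type*} (G : SimpleGraph V) where
  anc : V → V → Prop
  refl : ∀ v, anc v v
  antisymm : ∀ u v, anc u v → anc v u → u = v
  trans : ∀ u v w, anc u v → anc v w → anc u w
  chain : ∀ u v w, anc u w → anc v w → anc u v ∨ anc v u
  edge : ∀ u v, G.Adj u v → anc u v ∨ anc v u

/-- The decomposition has depth at most `k`: every ancestor-descendant chain has
at most `k` vertices. -/
def TreedepthDecomp.depthLE {V : Type*} {G : SimpleGraph V} (d : TreedepthDecomp G)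
    (k : ℕ) : Prop :=
  ∀ s : Finset V, (∀ a ∈ s, ∀ b ∈ s, d.anc a b ∨ d.anc b a) → s.card ≤ k

/-- The treedepth of `G`: minimum depth of a treedepth decomposition. -/
noncomputable def treedepth {V : Type*} (G : SimpleGraph V) : ℕ :=
  sInf {k | ∃ d : TreedepthDecomp G, d.depthLE k}


namespace TDC

attribute [local instance] Classical.propDecidable

variable {V : Type*} [Fintype V]

/-- Restriction of `G` to edges inside `S`, as a graph on all of `V`. -/
def gr (G : SimpleGraph V) (S : Finset V) : SimpleGraph V where
  Adj a b := G.Adj a b ∧ a ∈ S ∧ b ∈ S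
  symm := ⟨fun a b h => ⟨h.1.symm, h.2.2, h.2.1⟩⟩
  loopless := ⟨fun a h => G.loopless.irrefl a h.1⟩

/-- Component of `v` inside `S`. -/
noncomputable def comp (G : SimpleGraph V) (v : V) (S : Finset V) : Finset V :=
  Finset.univ.filter fun w => (gr G S).Reachable v w

lemma mem_comp {G : SimpleGraph V} {v : V} {S : Finset V} {w : V} :
    w ∈ comp G v S ↔ (gr G S).Reachable v w := by
  simp [comp]

lemma self_mem_comp {G : SimpleGraph V} {v : V} {S : Finset V} : v ∈ comp G v S :=
  mem_comp.mpr (SimpleGraph.Reachable.refl v)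

lemma comp_coherent {G : SimpleGraph V} {v w : V} {S : Finset V}
    (h : w ∈ comp G v S) : comp G w S = comp G v S := by
  have hr := mem_comp.mp h
  ext x
  simp only [mem_comp]
  exact ⟨fun hx => hr.trans hx, fun hx => hr.symm.trans hx⟩

lemma walk_end_mem {G : SimpleGraph V} {S : Finset V} :
    ∀ {v w : V}, (gr G S).Walk v w → w = v ∨ w ∈ S
  | _, _, SimpleGraph.Walk.nil => Or.inl rfl
  | _, _, SimpleGraph.Walk.cons h q =>
      (walk_end_mem q).elim (fun e => Or.inr (e ▸ h.2.2)) Or.inr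

lemma mem_of_mem_comp {G : SimpleGraph V} {v w : V} {S : Finset V}
    (h : w ∈ comp G v S) : w = v ∨ w ∈ S := by
  obtain ⟨p⟩ := mem_comp.mp h
  exact walk_end_mem p

lemma comp_eq_singleton {G : SimpleGraph V} {v : V} {S : Finset V} (hv : v ∉ S) :
    comp G v S = {v} := by
  ext w
  simp only [mem_comp, Finset.mem_singleton]
  constructor
  · rintro ⟨p⟩
    cases p with
    | nil => rfl
    | cons h q => exact absurd h.2.1 hv
  · rintro rfl; exact SimpleGraph.Reachable.refl _

lemma reach_in_comp {G : SimpleGraph V} {v : V} {S : Finset V} {a b : V}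
    (p : (gr G S).Walk a b) (ha : a ∈ comp G v S) (hb : b ∈ comp G v S) :
      (G.induce (↑(comp G v S) : Set V)).Reachable ⟨a, Finset.mem_coe.mpr ha⟩
        ⟨b, Finset.mem_coe.mpr hb⟩ := by
  induction p with
  | nil => exact SimpleGraph.Reachable.refl _
  | @cons x y w h q ih =>
      have hy : y ∈ comp G v S := mem_comp.mpr ((mem_comp.mp ha).trans h.reachable)
      have hadj : (G.induce (↑(comp G v S) : Set V)).Adj ⟨x, Finset.mem_coe.mpr ha⟩
          ⟨y, Finset.mem_coe.mpr hy⟩ := h.1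
      exact hadj.reachable.trans (ih hy hb)

lemma comp_connected {G : SimpleGraph V} {v : V} {S : Finset V} :
    (G.induce (↑(comp G v S) : Set V)).Connected := by
  rw [SimpleGraph.connected_iff]
  refine ⟨?_, ⟨⟨v, Finset.mem_coe.mpr self_mem_comp⟩⟩⟩
  rintro ⟨a, ha⟩ ⟨b, hb⟩
  have ha' : a ∈ comp G v S := Finset.mem_coe.mp ha
  have hb' : b ∈ comp G v S := Finset.mem_coe.mp hb
  obtain ⟨p⟩ := (mem_comp.mp ha').symm.trans (mem_comp.mp hb')
  exact reach_in_comp p ha' hb'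

lemma singleton_connected (G : SimpleGraph V) (v : V) :
    (G.induce (↑({v} : Finset V) : Set V)).Connected := by
  rw [SimpleGraph.connected_iff]
  refine ⟨?_, ⟨⟨v, by simp⟩⟩⟩
  rintro ⟨a, ha⟩ ⟨b, hb⟩
  have hab : (⟨a, ha⟩ : (↑({v} : Finset V) : Set V)) = ⟨b, hb⟩ := by
    apply Subtype.ext
    have ha' : a = v := by simpa using ha
    have hb' : b = v := by simpa using hb
    exact ha'.trans hb'.symm
  rw [hab]

section Decomp

variable [Nonempty V] {k : ℕ}

/-- A choice of center of `S` (a vertex whose color is unique in `S`), when one exists. -/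
noncomputable def ctr (φ : V → Fin k) (S : Finset V) : V :=
  if h : ∃ w ∈ S, (S.filter (fun x => φ x = φ w)).card = 1 then h.choose
  else Classical.arbitrary V

variable {G : SimpleGraph V} {φ : V → Fin k}

lemma ctr_spec (hφ : IsCenteredColoring G φ) {S : Finset V} (h1 : S.Nonempty)
    (h2 : (G.induce (S : Set V)).Connected) :
    ctr φ S ∈ S ∧ (S.filter (fun x => φ x = φ (ctr φ S))).card = 1 := by
  have h := hφ S h1 h2
  rw [ctr, dif_pos h]
  exact ⟨h.choose_spec.1, h.choose_spec.2⟩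

/-- The component of `v` after `n` rounds of center removal. -/
noncomputable def fce (G : SimpleGraph V) (φ : V → Fin k) (v : V) : ℕ → Finset V
  | 0 => comp G v Finset.univ
  | n+1 => comp G v ((fce G φ v n).erase (ctr φ (fce G φ v n)))

variable (hφ : IsCenteredColoring G φ)

lemma self_mem_fce (v : V) (n : ℕ) : v ∈ fce G φ v n := by
  cases n <;> exact self_mem_comp

lemma fce_nonempty (v : V) (n : ℕ) : (fce G φ v n).Nonempty := ⟨v, self_mem_fce v n⟩

lemma fce_connected (v : V) (n : ℕ) :
    (G.induce ((fce G φ v n : Finset V) : Set V)).Connected := by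
  cases n <;> exact comp_connected

include hφ in
lemma ctr_fce_mem (v : V) (n : ℕ) : ctr φ (fce G φ v n) ∈ fce G φ v n :=
  (ctr_spec hφ (fce_nonempty v n) (fce_connected v n)).1

include hφ in
lemma ctr_fce_card (v : V) (n : ℕ) :
    ((fce G φ v n).filter (fun x => φ x = φ (ctr φ (fce G φ v n)))).card = 1 :=
  (ctr_spec hφ (fce_nonempty v n) (fce_connected v n)).2

lemma fce_succ_subset (v : V) (n : ℕ) : fce G φ v (n+1) ⊆ fce G φ v n := by
  intro w hw
  rcases mem_of_mem_comp hw with rfl | h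
  · exact self_mem_fce w n
  · exact Finset.erase_subset _ _ h

lemma fce_antitone (v : V) {m n : ℕ} (h : m ≤ n) : fce G φ v n ⊆ fce G φ v m := by
  induction n with
  | zero => cases Nat.le_zero.mp h; exact fun _ h => h
  | succ n ih =>
      rcases Nat.lt_or_ge m (n+1) with h' | h'
      · exact (fce_succ_subset v n).trans (ih (Nat.lt_succ_iff.mp h'))
      · have : m = n+1 := le_antisymm h h'
        subst this; exact fun _ h => h

lemma fce_coherent : ∀ (n : ℕ) {v w : V}, w ∈ fce G φ v n → fce G φ w n = fce G φ v n := by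
  intro n
  induction n with
  | zero => intro v w hw; exact comp_coherent hw
  | succ n ih =>
      intro v w hw
      have hw' : w ∈ fce G φ v n := fce_succ_subset v n hw
      have hn : fce G φ w n = fce G φ v n := ih hw'
      show comp G w _ = comp G v _
      rw [hn]
      exact comp_coherent hw

lemma fce_fix {v : V} {n : ℕ} (h : v = ctr φ (fce G φ v n)) :
    fce G φ v (n+1) = {v} := by
  show comp G v _ = {v}
  apply comp_eq_singleton
  rw [← h]
  exact Finset.notMem_erase v _

include hφ in
lemma ctr_singleton (v : V) : ctr φ ({v} : Finset V) = v := by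
  have := (ctr_spec hφ (Finset.singleton_nonempty v) (singleton_connected G v)).1
  simpa using this

include hφ in
lemma fce_stab {v : V} {n : ℕ} (h : v = ctr φ (fce G φ v n)) :
    ∀ j, fce G φ v (n+1+j) = {v} := by
  intro j
  induction j with
  | zero => exact fce_fix h
  | succ j ih =>
      have : fce G φ v (n+1+(j+1)) = comp G v ((fce G φ v (n+1+j)).erase (ctr φ (fce G φ v (n+1+j)))) := rfl
      rw [this, ih, ctr_singleton hφ]
      apply comp_eq_singleton
      simp

include hφ in
lemma fce_strict {v : V} {n : ℕ} (h : v ≠ ctr φ (fce G φ v n)) :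
    (fce G φ v (n+1)).card < (fce G φ v n).card := by
  apply Finset.card_lt_card
  constructor
  · exact fce_succ_subset v n
  · intro hsub
    have hc : ctr φ (fce G φ v n) ∈ fce G φ v (n+1) := hsub (ctr_fce_mem hφ v n)
    rcases mem_of_mem_comp hc with e | hmem
    · exact h e.symm
    · exact Finset.notMem_erase _ _ hmem

include hφ in
lemma exists_fix (v : V) : ∃ n, v = ctr φ (fce G φ v n) := by
  by_contra hcon
  push_neg at hcon
  have key : ∀ n, (fce G φ v n).card + n ≤ (fce G φ v 0).card := by
    intro n
    induction n with
    | zero => simp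
    | succ n ih =>
        have := fce_strict hφ (hcon n)
        omega
  have h1 := key ((fce G φ v 0).card)
  have h2 := Finset.card_pos.mpr (fce_nonempty (G := G) (φ := φ) v ((fce G φ v 0).card))
  omega

lemma fce_key {u v : V} {n : ℕ} (hu : u ∈ fce G φ v n) {m : ℕ} (hm : m ≤ n) :
    fce G φ u m = fce G φ v m :=
  fce_coherent m (fce_antitone v hm hu)

include hφ in
lemma fce_eventually_singleton (v : V) : ∃ N, fce G φ v N = {v} := by
  obtain ⟨n, hn⟩ := exists_fix hφ v
  exact ⟨n+1, fce_fix hn⟩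

/-- The ancestor relation extracted from the coloring. -/
def ancOf (G : SimpleGraph V) (φ : V → Fin k) (u v : V) : Prop :=
  ∃ n, u = ctr φ (fce G φ v n)

include hφ in
lemma ancOf_refl (v : V) : ancOf G φ v v := exists_fix hφ v

include hφ in
lemma ctr_fce_far {v : V} {m n : ℕ} (h : v = ctr φ (fce G φ v m)) (hmn : m ≤ n) :
    v = ctr φ (fce G φ v n) := by
  rcases Nat.eq_or_lt_of_le hmn with rfl | hlt
  · exact h
  · have : fce G φ v n = {v} := by
      have := fce_stab hφ h (n - (m+1))
      rwa [show m+1+(n-(m+1)) = n by omega] at this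
    rw [this, ctr_singleton hφ]

include hφ in
lemma ancOf_trans (u v w : V) (huv : ancOf G φ u v) (hvw : ancOf G φ v w) :
    ancOf G φ u w := by
  obtain ⟨n, hn⟩ := huv
  obtain ⟨m, hm⟩ := hvw
  have hvm : v ∈ fce G φ w m := hm ▸ ctr_fce_mem hφ w m
  rcases le_total n m with h | h
  · refine ⟨n, ?_⟩
    rw [← fce_key hvm h]
    exact hn
  · -- m ≤ n : v = ctr (fce v m), so fce v n = {v} for n > m, u = v
    have hvv : v = ctr φ (fce G φ v m) := by rw [fce_key hvm (le_refl m)]; exact hm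
    have hv : v = ctr φ (fce G φ v n) := ctr_fce_far hφ hvv h
    have : u = v := hn.trans hv.symm
    exact ⟨m, this ▸ hm⟩

include hφ in
lemma ancOf_antisymm (u v : V) (huv : ancOf G φ u v) (hvu : ancOf G φ v u) : u = v := by
  obtain ⟨n, hn⟩ := huv
  obtain ⟨m, hm⟩ := hvu
  have hum : u ∈ fce G φ v n := hn ▸ ctr_fce_mem hφ v n
  have hvm : v ∈ fce G φ u m := hm ▸ ctr_fce_mem hφ u m
  rcases le_total m n with h | h
  · -- fce u m = fce v m, so v = ctr (fce v m)
    have hvv : v = ctr φ (fce G φ v m) := by rw [← fce_key hum h]; exact hm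
    have := ctr_fce_far hφ hvv (le_trans h (le_refl n))
    exact hn.trans ((ctr_fce_far hφ hvv h)).symm
  · have huu : u = ctr φ (fce G φ u n) := by rw [← fce_key hvm h]; exact hn
    exact (hm.trans ((ctr_fce_far hφ huu h)).symm).symm

include hφ in
lemma ancOf_chain (u v w : V) (hu : ancOf G φ u w) (hv : ancOf G φ v w) :
    ancOf G φ u v ∨ ancOf G φ v u := by
  obtain ⟨n, hn⟩ := hu
  obtain ⟨m, hm⟩ := hv
  rcases le_total n m with h | h
  · left
    have hvm : v ∈ fce G φ w n := fce_antitone w h (hm ▸ ctr_fce_mem hφ w m)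
    refine ⟨n, ?_⟩
    rw [fce_key hvm (le_refl n)]
    exact hn
  · right
    have hum : u ∈ fce G φ w m := fce_antitone w h (hn ▸ ctr_fce_mem hφ w n)
    refine ⟨m, ?_⟩
    rw [fce_key hum (le_refl m)]
    exact hm

include hφ in
lemma ancOf_edge_aux {u v : V} (huv : G.Adj u v) :
    ∀ n, fce G φ u n = fce G φ v n ∨ ancOf G φ u v ∨ ancOf G φ v u := by
  intro n
  induction n with
  | zero =>
      left
      have : v ∈ comp G u Finset.univ :=
        mem_comp.mpr (SimpleGraph.Adj.reachable ⟨huv, Finset.mem_univ u, Finset.mem_univ v⟩)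
      exact (comp_coherent this).symm
  | succ n ih =>
      rcases ih with heq | h
      · set c := ctr φ (fce G φ u n) with hc
        by_cases hcu : c = u
        · right; left; exact ⟨n, by rw [← heq, ← hc, hcu]⟩
        · by_cases hcv : c = v
          · right; right; exact ⟨n, by rw [← hc, hcv]⟩
          · left
            have humem : u ∈ (fce G φ u n).erase c :=
              Finset.mem_erase.mpr ⟨fun e => hcu e.symm, self_mem_fce u n⟩
            have hvmem : v ∈ (fce G φ u n).erase c :=
              Finset.mem_erase.mpr ⟨fun e => hcv e.symm, heq ▸ self_mem_fce v n⟩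
            have hadj : (gr G ((fce G φ u n).erase c)).Adj u v := ⟨huv, humem, hvmem⟩
            have e1 : fce G φ v (n+1) = comp G v ((fce G φ u n).erase c) := by
              show comp G v ((fce G φ v n).erase (ctr φ (fce G φ v n))) = _
              rw [show fce G φ v n = fce G φ u n from heq.symm]
            have e2 : fce G φ u (n+1) = comp G u ((fce G φ u n).erase c) := rfl
            rw [e1, e2]
            exact comp_coherent (mem_comp.mpr hadj.symm.reachable)
      · right; exact h

include hφ in
lemma ancOf_edge (u v : V) (huv : G.Adj u v) : ancOf G φ u v ∨ ancOf G φ v u := by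
  obtain ⟨N, hN⟩ := fce_eventually_singleton hφ v
  rcases ancOf_edge_aux hφ huv N with heq | h
  · exfalso
    have : u ∈ ({v} : Finset V) := by
      rw [← hN, ← heq]
      exact self_mem_fce u N
    exact huv.ne (Finset.mem_singleton.mp this)
  · exact h

/-- The treedepth decomposition built from a centered coloring. -/
def decompOf (hφ : IsCenteredColoring G φ) : TreedepthDecomp G where
  anc := ancOf G φ
  refl := ancOf_refl hφ
  antisymm := ancOf_antisymm hφ
  trans := ancOf_trans hφ
  chain := ancOf_chain hφ
  edge := ancOf_edge hφ

include hφ in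
lemma ancOf_color_ne {u v : V} (h : ancOf G φ u v) (hne : u ≠ v) : φ u ≠ φ v := by
  obtain ⟨n, hn⟩ := h
  intro heq
  have h1 := ctr_fce_card hφ v n
  have hu : u ∈ (fce G φ v n).filter (fun x => φ x = φ (ctr φ (fce G φ v n))) :=
    Finset.mem_filter.mpr ⟨hn ▸ ctr_fce_mem hφ v n, by rw [← hn]⟩
  have hv : v ∈ (fce G φ v n).filter (fun x => φ x = φ (ctr φ (fce G φ v n))) :=
    Finset.mem_filter.mpr ⟨self_mem_fce v n, by rw [← hn, ← heq]⟩
  have : 1 < ((fce G φ v n).filter (fun x => φ x = φ (ctr φ (fce G φ v n)))).card :=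
    Finset.one_lt_card.mpr ⟨u, hu, v, hv, hne⟩
  omega

include hφ in
lemma decompOf_depthLE : (decompOf hφ).depthLE k := by
  intro s hs
  have hinj : Set.InjOn φ s := by
    intro a ha b hb hab
    by_contra hne
    rcases hs a ha b hb with h | h
    · exact ancOf_color_ne hφ h hne hab
    · exact ancOf_color_ne hφ h (Ne.symm hne) hab.symm
  calc s.card ≤ (Finset.univ : Finset (Fin k)).card :=
        Finset.card_le_card_of_injOn φ (fun a _ => Finset.mem_univ _) hinj
    _ = k := by simp

end Decomp

section Color

variable {G : SimpleGraph V}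

/-- Ancestor set of `v` in a decomposition. -/
noncomputable def ancSet (d : TreedepthDecomp G) (v : V) : Finset V :=
  Finset.univ.filter fun u => d.anc u v

lemma mem_ancSet {d : TreedepthDecomp G} {u v : V} : u ∈ ancSet d v ↔ d.anc u v := by
  simp [ancSet]

lemma self_mem_ancSet (d : TreedepthDecomp G) (v : V) : v ∈ ancSet d v :=
  mem_ancSet.mpr (d.refl v)

lemma ancSet_card_pos (d : TreedepthDecomp G) (v : V) : 1 ≤ (ancSet d v).card :=
  Finset.card_pos.mpr ⟨v, self_mem_ancSet d v⟩

lemma ancSet_card_le {d : TreedepthDecomp G} {k : ℕ} (hd : d.depthLE k) (v : V) :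
    (ancSet d v).card ≤ k := by
  apply hd
  intro a ha b hb
  exact d.chain a b v (mem_ancSet.mp ha) (mem_ancSet.mp hb)

lemma ancSet_subset {d : TreedepthDecomp G} {c x : V} (h : d.anc c x) :
    ancSet d c ⊆ ancSet d x := by
  intro u hu
  exact mem_ancSet.mpr (d.trans u c x (mem_ancSet.mp hu) h)

lemma ancSet_card_lt {d : TreedepthDecomp G} {c x : V} (h : d.anc c x) (hne : c ≠ x) :
    (ancSet d c).card < (ancSet d x).card := by
  apply Finset.card_lt_card
  refine ⟨ancSet_subset h, fun hsub => ?_⟩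
  have hx : x ∈ ancSet d c := hsub (self_mem_ancSet d x)
  exact hne (d.antisymm c x h (mem_ancSet.mp hx))

/-- Color of `v`: size of its ancestor set minus one. -/
noncomputable def colOf (d : TreedepthDecomp G) {k : ℕ} (hd : d.depthLE k) (v : V) : Fin k :=
  ⟨(ancSet d v).card - 1, by
    have h1 := ancSet_card_pos d v
    have h2 := ancSet_card_le hd v
    omega⟩

lemma walk_center (d : TreedepthDecomp G) {S : Set V} {a b : ↥S}
    (p : (G.induce S).Walk a b) :
    ∃ c ∈ p.support, d.anc (c : V) (a : V) ∧ d.anc (c : V) (b : V) := by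
  induction p with
  | nil => exact ⟨_, List.mem_singleton.mpr rfl, d.refl _, d.refl _⟩
  | @cons x y w h q ih =>
      obtain ⟨c, hcm, hcx, hcb⟩ := ih
      have hadj : G.Adj (x : V) (y : V) := h
      rcases d.edge _ _ hadj with hxy | hyx
      · -- x anc y ; compare x and c, both ancestors of y
        rcases d.chain (x : V) (c : V) (y : V) hxy hcx with hxc | hcx'
        · exact ⟨x, List.mem_cons_self, d.refl _, d.trans _ _ _ hxc hcb⟩
        · exact ⟨c, List.mem_cons_of_mem _ hcm, hcx', hcb⟩
      · exact ⟨c, List.mem_cons_of_mem _ hcm, d.trans _ _ _ hcx hyx, hcb⟩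

lemma centered_of_decomp {k : ℕ} (d : TreedepthDecomp G) (hd : d.depthLE k) :
    ∃ φ : V → Fin k, IsCenteredColoring G φ := by
  refine ⟨colOf d hd, ?_⟩
  intro S hS hconn
  obtain ⟨w, hw, hmin⟩ := S.exists_min_image (fun v => (ancSet d v).card) hS
  refine ⟨w, hw, ?_⟩
  rw [Finset.card_eq_one]
  refine ⟨w, ?_⟩
  ext x
  simp only [Finset.mem_filter, Finset.mem_singleton]
  constructor
  · rintro ⟨hxS, hcol⟩
    have hcards : (ancSet d x).card = (ancSet d w).card := by
      have h1 := ancSet_card_pos d x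
      have h2 := ancSet_card_pos d w
      have : (ancSet d x).card - 1 = (ancSet d w).card - 1 := congrArg Fin.val hcol
      omega
    obtain ⟨p⟩ := hconn.preconnected ⟨x, Finset.mem_coe.mpr hxS⟩ ⟨w, Finset.mem_coe.mpr hw⟩
    obtain ⟨c, hcm, hcx, hcw⟩ := walk_center d p
    have hcS : (c : V) ∈ S := Finset.mem_coe.mp c.2
    have hcx' : (c : V) = x := by
      by_contra hne
      have hlt := ancSet_card_lt hcx hne
      have hm : (ancSet d w).card ≤ (ancSet d (c : V)).card := hmin (c : V) hcS
      rw [hcards] at hlt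
      exact absurd hm (not_le.mpr hlt)
    by_contra hne
    have hlt := ancSet_card_lt (hcx' ▸ hcw) hne
    rw [hcards] at hlt
    exact absurd hlt (lt_irrefl _)
  · rintro rfl
    exact ⟨hw, rfl⟩

end Color

end TDC

theorem treedepth_eq_min_centered_coloring {V : Type*} [Fintype V] (G : SimpleGraph V) :
    treedepth G = sInf {k | ∃ φ : V → Fin k, IsCenteredColoring G φ} := by
  unfold treedepth
  congr 1
  ext k
  simp only [Set.mem_setOf_eq]
  constructor
  · rintro ⟨d, hd⟩
    exact TDC.centered_of_decomp d hd
  · rintro ⟨φ, hφ⟩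
    cases isEmpty_or_nonempty V with
    | inl hempty =>
        refine ⟨⟨Eq, fun v => rfl, fun u v h _ => h, fun u v w h1 h2 => h1.trans h2,
          fun u v w h1 h2 => Or.inl (h1.trans h2.symm),
          fun u v h => (hempty.elim u)⟩, ?_⟩
        intro s _
        have : s = ∅ := Finset.eq_empty_of_isEmpty s
        simp [this]
    | inr hne =>
        exact ⟨TDC.decompOf hφ, TDC.decompOf_depthLE hφ⟩
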